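/- Let S be an E-unitary inverse semigroup with E = E(S). Let Ω = {(s, φ) ∈ S × Ê : φ(s*·s) = true}, topologized as a subspace of S × Ê where S is discrete, and let ~ be the relation on Ω given by (s, φ) ~ (t, ψ) iff φ = ψ and there exists u ∈ S with u ≤ s, u ≤ t and φ(u*·u) = true. Then the quotient space Ω/~ with the quotient topology (the underlying space of Paterson's universal groupoid of S) is Hausdorff. -/

import Mathlib

class InverseSemigroup (S : Type*) extends Semigroup S, StarMul S where
  mul_star_mul_self : ∀ s : S, s * star s * s = s
  star_mul_star_self : ∀ s : S, star s * s * star s = star s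
  idem_comm : ∀ e f : S, e * e = e → f * f = f → e * f = f * e

namespace InverseSemigroup

variable {S : Type*} [InverseSemigroup S]

lemma idem_star_mul (s : S) : (star s * s) * (star s * s) = star s * s := by
  calc (star s * s) * (star s * s) = star s * (s * star s * s) := by
        simp only [mul_assoc]
    _ = star s * s := by rw [mul_star_mul_self]

lemma mul_star_idem (s : S) : (s * star s) * (s * star s) = s * star s := by
  calc (s * star s) * (s * star s) = s * (star s * s * star s) := by
        simp only [mul_assoc]
    _ = s * star s := by rw [star_mul_star_self]

lemma idem_mul {e f : S} (he : e * e = e) (hf : f * f = f) :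
    (e * f) * (e * f) = e * f := by
  have hc : f * e = e * f := idem_comm f e hf he
  calc (e * f) * (e * f) = e * (f * e) * f := by simp only [mul_assoc]
    _ = e * (e * f) * f := by rw [hc]
    _ = (e * e) * (f * f) := by simp only [mul_assoc]
    _ = e * f := by rw [he, hf]

lemma idem_conj {e : S} (he : e * e = e) (s : S) :
    (star s * e * s) * (star s * e * s) = star s * e * s := by
  have hf : (s * star s) * (s * star s) = s * star s := mul_star_idem s
  have hc : e * (s * star s) = (s * star s) * e := idem_comm e _ he hf
  calc (star s * e * s) * (star s * e * s)
      = star s * (e * (s * star s)) * (e * s) := by simp only [mul_assoc]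
    _ = star s * ((s * star s) * e) * (e * s) := by rw [hc]
    _ = star s * (s * star s) * (e * e) * s := by simp only [mul_assoc]
    _ = star s * (s * star s) * e * s := by rw [he]
    _ = (star s * s * star s) * e * s := by simp only [mul_assoc]
    _ = star s * e * s := by rw [star_mul_star_self]

lemma conj_mul {e f : S} (_he : e * e = e) (hf : f * f = f) (s : S) :
    (star s * e * s) * (star s * f * s) = star s * (e * f) * s := by
  have hss : (s * star s) * (s * star s) = s * star s := mul_star_idem s
  have hc : (s * star s) * f = f * (s * star s) := idem_comm _ _ hss hf
  calc (star s * e * s) * (star s * f * s)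
      = star s * e * ((s * star s) * f) * s := by simp only [mul_assoc]
    _ = star s * e * (f * (s * star s)) * s := by rw [hc]
    _ = star s * (e * f) * (s * star s * s) := by simp only [mul_assoc]
    _ = star s * (e * f) * s := by rw [mul_star_mul_self]

lemma conj_ss (s : S) : star s * (s * star s) * s = star s * s := by
  calc star s * (s * star s) * s = (star s * s * star s) * s := by
        simp only [mul_assoc]
    _ = star s * s := by rw [star_mul_star_self]

end InverseSemigroup

open InverseSemigroup

/-- The natural partial order on an inverse semigroup: `s ≤ t` iff `s = t·s*·s`. -/
def nle {S : Type*} [InverseSemigroup S] (s t : S) : Prop := s = t * (star s * s)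

/-- `σ(s) = σ(t)` iff `s·e = t·e` for some idempotent `e`. -/
def sigmaEq {S : Type*} [InverseSemigroup S] (s t : S) : Prop :=
  ∃ e : S, e * e = e ∧ s * e = t * e

/-- `S` is E-unitary if every element above a nonzero idempotent is idempotent. -/
def EUnitary (S : Type*) [InverseSemigroup S] : Prop :=
  ∀ e s : S, e * e = e → nle e s → s * s = s

/-- The semilattice of idempotents of an inverse semigroup. -/
def Idem (S : Type*) [InverseSemigroup S] : Type _ := {e : S // e * e = e}

instance {S : Type*} [InverseSemigroup S] : Mul (Idem S) :=
  ⟨fun e f => ⟨e.1 * f.1, idem_mul e.2 f.2⟩⟩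

/-- A semi-character of a semilattice. -/
structure SemiChar (E : Type*) [Mul E] where
  toFun : E → Bool
  map_mul' : ∀ e f : E, toFun (e * f) = (toFun e && toFun f)
  exists_true : ∃ e : E, toFun e = true

/-- The space `Ê` of semi-characters, with the subspace topology from `Bool^E`. -/
instance {E : Type*} [Mul E] : TopologicalSpace (SemiChar E) :=
  TopologicalSpace.induced (fun χ => χ.toFun) Pi.topologicalSpace

/-- For `e` idempotent, `s*·e·s` is idempotent. -/
def conjIdem {S : Type*} [InverseSemigroup S] (s : S) (e : Idem S) : Idem S :=
  ⟨star s * e.1 * s, idem_conj e.2 s⟩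

/-- The semi-character `s·χ` defined by `(s·χ)(e) = χ(s*·e·s)`. -/
def sDot {S : Type*} [InverseSemigroup S] (s : S) (χ : SemiChar (Idem S))
    (h : χ.toFun ⟨star s * s, idem_star_mul s⟩ = true) : SemiChar (Idem S) where
  toFun e := χ.toFun (conjIdem s e)
  map_mul' e f := by
    have heq : conjIdem s (e * f) = conjIdem s e * conjIdem s f :=
      Subtype.ext (conj_mul e.2 f.2 s).symm
    simp only [heq, χ.map_mul']
  exists_true := ⟨⟨s * star s, mul_star_idem s⟩, by
    have heq : conjIdem s ⟨s * star s, mul_star_idem s⟩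
        = (⟨star s * s, idem_star_mul s⟩ : Idem S) := Subtype.ext (conj_ss s)
    simp only [heq]; exact h⟩

/-- The space `Ω = {(s, φ) : φ(s*·s) = true}`, where `S` carries the discrete topology. -/
def Omega (S : Type*) [InverseSemigroup S] : Type _ :=
  {p : S × SemiChar (Idem S) // p.2.toFun ⟨star p.1 * p.1, idem_star_mul p.1⟩ = true}

instance OmegaTop (S : Type*) [InverseSemigroup S] : TopologicalSpace (Omega S) :=
  letI : TopologicalSpace S := ⊥
  inferInstanceAs (TopologicalSpace
    {p : S × SemiChar (Idem S) // p.2.toFun ⟨star p.1 * p.1, idem_star_mul p.1⟩ = true})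

/-- The germ relation: `(s, φ) ~ (t, ψ)` iff `φ = ψ` and there is `u ≤ s, t` with
`φ(u*·u) = true`. -/
def germRel {S : Type*} [InverseSemigroup S] (p q : Omega S) : Prop :=
  p.1.2 = q.1.2 ∧ ∃ u : S, nle u p.1.1 ∧ nle u q.1.1 ∧
    p.1.2.toFun ⟨star u * u, idem_star_mul u⟩ = true

/-- The quotient `Ω/~` (the underlying space of Paterson's universal groupoid),
with the quotient topology. -/
def UnivSpace (S : Type*) [InverseSemigroup S] : Type _ := Quot (germRel (S := S))

instance (S : Type*) [InverseSemigroup S] : TopologicalSpace (UnivSpace S) :=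
  inferInstanceAs (TopologicalSpace (Quot (germRel (S := S))))

/-- The class of `(s, φ)` in `Ω/~`. -/
def germMk {S : Type*} [InverseSemigroup S] (p : Omega S) : UnivSpace S :=
  Quot.mk (germRel (S := S)) p

section UnivAux

open InverseSemigroup

variable {S : Type*} [InverseSemigroup S]

lemma idem_star' {e : S} (he : e * e = e) : star e = e := by
  have h1 : star e * star e = star e := by rw [← star_mul, he]
  have h2 : e * star e = star e * e := idem_comm e (star e) he h1
  have h3 : e = star e * e := by
    conv_lhs => rw [← mul_star_mul_self e]
    rw [h2, mul_assoc, he]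
  calc star e = star (star e * e) := by rw [← h3]
    _ = star e * star (star e) := by rw [star_mul]
    _ = star e * e := by rw [star_star]
    _ = e := h3.symm

lemma swap_ss (s t : S) : (star s * s) * (star t * t) = (star t * t) * (star s * s) :=
  idem_comm _ _ (idem_star_mul s) (idem_star_mul t)

lemma le_ss {u t : S} (hut : nle u t) : (star t * t) * (star u * u) = star u * u := by
  have hu : star u = (star u * u) * star t := by
    conv_lhs => rw [hut, star_mul, star_mul, star_star]
  have key : star u * u = (star u * u) * (star t * t) := by
    calc star u * u = ((star u * u) * star t) * (t * (star u * u)) := by rw [← hu, ← hut]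
      _ = (star u * u) * ((star t * t) * (star u * u)) := by simp only [mul_assoc]
      _ = (star u * u) * ((star u * u) * (star t * t)) := by rw [swap_ss]
      _ = ((star u * u) * (star u * u)) * (star t * t) := by simp only [mul_assoc]
      _ = (star u * u) * (star t * t) := by rw [idem_star_mul]
  rw [swap_ss]
  exact key.symm

lemma nle_refl (s : S) : nle s s := by
  show s = s * (star s * s)
  rw [← mul_assoc, mul_star_mul_self]

lemma nle_trans {x y z : S} (hxy : nle x y) (hyz : nle y z) : nle x z := by
  show x = z * (star x * x)
  calc x = y * (star x * x) := hxy
    _ = (z * (star y * y)) * (star x * x) := by rw [← hyz]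
    _ = z * ((star y * y) * (star x * x)) := by rw [mul_assoc]
    _ = z * (star x * x) := by rw [le_ss hxy]

lemma star_mul_idem_mul {e : S} (he : e * e = e) (x : S) :
    star (x * e) * (x * e) = (star x * x) * e := by
  have hse : star e = e := idem_star' he
  calc star (x * e) * (x * e) = (star e * star x) * (x * e) := by rw [star_mul]
    _ = (e * star x) * (x * e) := by rw [hse]
    _ = e * ((star x * x) * e) := by simp only [mul_assoc]
    _ = e * (e * (star x * x)) := by rw [idem_comm _ _ (idem_star_mul x) he]
    _ = (e * e) * (star x * x) := by simp only [mul_assoc]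
    _ = e * (star x * x) := by rw [he]
    _ = (star x * x) * e := idem_comm e _ he (idem_star_mul x)

lemma nle_mul_idem {e : S} (he : e * e = e) (x : S) : nle (x * e) x := by
  show x * e = x * (star (x * e) * (x * e))
  rw [star_mul_idem_mul he]
  conv_rhs => rw [← mul_assoc, ← mul_assoc, mul_star_mul_self]

lemma swap_uv {u v r : S} (hur : nle u r) (hvr : nle v r) :
    u * (star v * v) = v * (star u * u) := by
  calc u * (star v * v) = (r * (star u * u)) * (star v * v) := by rw [← hur]
    _ = r * ((star u * u) * (star v * v)) := by rw [mul_assoc]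
    _ = r * ((star v * v) * (star u * u)) := by rw [swap_ss]
    _ = (r * (star v * v)) * (star u * u) := by rw [← mul_assoc]
    _ = v * (star u * u) := by rw [← hvr]

lemma w_le {u v a c r : S} (hua : nle u a) (hur : nle u r) (hvr : nle v r) (hvc : nle v c) :
    nle (u * (star v * v)) a ∧ nle (u * (star v * v)) c := by
  constructor
  · exact nle_trans (nle_mul_idem (idem_star_mul v) u) hua
  · rw [swap_uv hur hvr]
    exact nle_trans (nle_mul_idem (idem_star_mul u) v) hvc

lemma st_idem (hE : EUnitary S) {u s t : S} (hus : nle u s) (hut : nle u t) :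
    (s * star t) * (s * star t) = s * star t := by
  have h4 : star t * u = star u * u := by
    calc star t * u = star t * (t * (star u * u)) := by rw [← hut]
      _ = (star t * t) * (star u * u) := by rw [← mul_assoc]
      _ = star u * u := le_ss hut
  have h5 : (s * star t) * (u * star u) = u * star u := by
    calc (s * star t) * (u * star u) = (s * (star t * u)) * star u := by simp only [mul_assoc]
      _ = (s * (star u * u)) * star u := by rw [h4]
      _ = u * star u := by rw [← hus]
  have h6 : nle (u * star u) (s * star t) := by
    show u * star u = (s * star t) * (star (u * star u) * (u * star u))
    rw [star_mul, star_star, mul_star_idem]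
    exact h5.symm
  exact hE _ _ (mul_star_idem u) h6

lemma backward {s t : S} (hst : (s * star t) * (s * star t) = s * star t) :
    nle (s * (star t * t)) s ∧ nle (s * (star t * t)) t ∧
      star (s * (star t * t)) * (s * (star t * t)) = (star s * s) * (star t * t) := by
  have hts : t * star s = s * star t := by
    calc t * star s = star (star t) * star s := by rw [star_star]
      _ = star (s * star t) := by rw [star_mul]
      _ = s * star t := idem_star' hst
  refine ⟨nle_mul_idem (idem_star_mul t) s, ?_, star_mul_idem_mul (idem_star_mul t) s⟩
  show s * (star t * t) = t * (star (s * (star t * t)) * (s * (star t * t)))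
  rw [star_mul_idem_mul (idem_star_mul t)]
  calc s * (star t * t)
      = (s * star t) * t := by rw [mul_assoc]
    _ = ((s * star t) * (s * star t)) * t := by rw [hst]
    _ = (s * star t) * (s * (star t * t)) := by simp only [mul_assoc]
    _ = (t * star s) * (s * (star t * t)) := by rw [hts]
    _ = t * ((star s * s) * (star t * t)) := by simp only [mul_assoc]

lemma transfer (hE : EUnitary S) {u a b s : S} (hua : nle u a) (hub : nle u b)
    (h : (a * star s) * (a * star s) = a * star s) :
    (b * star s) * (b * star s) = b * star s := by
  obtain ⟨hva, hvs, -⟩ := backward h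
  have hw := w_le (u := u) (v := a * (star s * s)) (a := b) (c := s) (r := a) hub hua hva hvs
  exact st_idem hE hw.1 hw.2

lemma idem_flip {s t : S} (h : (s * star t) * (s * star t) = s * star t) :
    (t * star s) * (t * star s) = t * star s := by
  have h2 : star (s * star t) * star (s * star t) = star (s * star t) := by
    rw [← star_mul, h]
  rwa [star_mul, star_star] at h2

lemma SemiChar.ext' {E : Type*} [Mul E] {χ ψ : SemiChar E}
    (h : ∀ e, χ.toFun e = ψ.toFun e) : χ = ψ := by
  cases χ
  cases ψ
  congr 1
  exact funext h

/-- The indicator of the saturated clopen set attached to `s`. -/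
noncomputable def germChar (s : S) (x : Omega S) : Bool :=
  @decide ((x.1.1 * star s) * (x.1.1 * star s) = x.1.1 * star s) (Classical.propDecidable _) &&
    x.1.2.toFun ⟨star s * s, idem_star_mul s⟩

lemma germChar_sound (hE : EUnitary S) (s : S) :
    ∀ x y : Omega S, germRel x y → germChar s x = germChar s y := by
  rintro x y ⟨hχ, u, hux, huy, -⟩
  unfold germChar
  rw [hχ]
  congr 1
  exact (@decide_eq_decide _ _ (Classical.propDecidable _) (Classical.propDecidable _)).mpr
    ⟨transfer hE hux huy, transfer hE huy hux⟩

lemma continuous_germChar (s : S) : Continuous (germChar (S := S) s) := by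
  letI : TopologicalSpace S := ⊥
  haveI : DiscreteTopology S := ⟨rfl⟩
  have h1 : Continuous (fun x : Omega S => (x.1 : S × SemiChar (Idem S))) :=
    continuous_subtype_val
  have hg1 : Continuous (fun x : Omega S =>
      @decide ((x.1.1 * star s) * (x.1.1 * star s) = x.1.1 * star s)
        (Classical.propDecidable _)) := by
    exact (continuous_of_discreteTopology
      (f := fun t : S => @decide ((t * star s) * (t * star s) = t * star s)
        (Classical.propDecidable _))).comp (continuous_fst.comp h1)
  have hg2 : Continuous (fun x : Omega S =>
      x.1.2.toFun (⟨star s * s, idem_star_mul s⟩ : Idem S)) := by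
    have h2 : Continuous (fun χ : SemiChar (Idem S) => χ.toFun) := continuous_induced_dom
    exact (continuous_apply (⟨star s * s, idem_star_mul s⟩ : Idem S)).comp
      (h2.comp (continuous_snd.comp h1))
  have hand : Continuous (fun bc : Bool × Bool => bc.1 && bc.2) :=
    continuous_of_discreteTopology
  exact hand.comp (hg1.prodMk hg2)

lemma continuous_evalChar (e : Idem S) :
    Continuous (fun x : Omega S => x.1.2.toFun e) := by
  letI : TopologicalSpace S := ⊥
  have h1 : Continuous (fun x : Omega S => (x.1 : S × SemiChar (Idem S))) :=
    continuous_subtype_val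
  have h2 : Continuous (fun χ : SemiChar (Idem S) => χ.toFun) := continuous_induced_dom
  exact (continuous_apply e).comp (h2.comp (continuous_snd.comp h1))

end UnivAux

theorem stmt5 {S : Type*} [InverseSemigroup S] (hE : EUnitary S) :
    T2Space (UnivSpace S) := by
  constructor
  intro a b hab
  obtain ⟨p, rfl⟩ := Quot.exists_rep a
  obtain ⟨q, rfl⟩ := Quot.exists_rep b
  by_cases hφ : p.1.2 = q.1.2
  · -- same semicharacter: separate using the clopen set attached to `s = p.1.1`
    have hnidem : ¬ ((q.1.1 * star p.1.1) * (q.1.1 * star p.1.1) = q.1.1 * star p.1.1) := by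
      intro h
      apply hab
      apply Quot.sound
      have h' := idem_flip h
      obtain ⟨h1, h2, h3⟩ := backward h'
      refine ⟨hφ, p.1.1 * (star q.1.1 * q.1.1), h1, h2, ?_⟩
      let e1 : Idem S := ⟨star p.1.1 * p.1.1, idem_star_mul p.1.1⟩
      let e2 : Idem S := ⟨star q.1.1 * q.1.1, idem_star_mul q.1.1⟩
      have heq : (⟨star (p.1.1 * (star q.1.1 * q.1.1)) * (p.1.1 * (star q.1.1 * q.1.1)),
          idem_star_mul _⟩ : Idem S) = e1 * e2 := Subtype.ext h3
      have hv1 : p.1.2.toFun e1 = true := p.2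
      have hv2 : p.1.2.toFun e2 = true := by rw [hφ]; exact q.2
      rw [heq, p.1.2.map_mul' e1 e2, hv1, hv2]
      rfl
    have hf : Continuous (Quot.lift (germChar p.1.1) (germChar_sound hE p.1.1)) :=
      continuous_quot_lift _ (continuous_germChar p.1.1)
    apply separated_by_continuous hf
    show germChar p.1.1 p ≠ germChar p.1.1 q
    have hpa : germChar p.1.1 p = true := by
      unfold germChar
      rw [Bool.and_eq_true]
      exact ⟨@decide_eq_true _ (Classical.propDecidable _) (mul_star_idem p.1.1), p.2⟩
    have hpb : germChar p.1.1 q = false := by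
      unfold germChar
      rw [@decide_eq_false _ (Classical.propDecidable _) hnidem, Bool.false_and]
    rw [hpa, hpb]
    simp
  · -- different semicharacters: separate by evaluation at some idempotent
    have hex : ∃ e : Idem S, p.1.2.toFun e ≠ q.1.2.toFun e := by
      by_contra h
      push_neg at h
      exact hφ (SemiChar.ext' h)
    obtain ⟨e, he⟩ := hex
    have hf : Continuous (Quot.lift (fun x : Omega S => x.1.2.toFun e)
        (fun x y (h : germRel x y) => congrArg (fun χ : SemiChar (Idem S) => χ.toFun e) h.1)) :=
      continuous_quot_lift _ (continuous_evalChar e)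
    exact separated_by_continuous hf he
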